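/- In the reduction graph H built from a bipartite RBDS instance: if H has a safe set S of size at most s = k + |R| + 1, then {u} ∪ R ⊆ S, S is connected, and B ∩ S is a set of size at most k dominating R in G. -/
import Mathlib


variable {V : Type*}

/-- Two vertex sets are adjacent if some edge joins them. -/
def SetsAdj (G : SimpleGraph V) (A B : Set V) : Prop :=
  ∃ a ∈ A, ∃ b ∈ B, G.Adj a b

/-- `u` and `v` are connected inside the induced subgraph `G[S]`. -/
def ReachIn (G : SimpleGraph V) (S : Set V) (u v : V) : Prop :=
  ∃ (hu : u ∈ S) (hv : v ∈ S), (G.induce S).Reachable ⟨u, hu⟩ ⟨v, hv⟩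

/-- `C` is (the vertex set of) a connected component of the induced subgraph `G[S]`. -/
def IsCompOf (G : SimpleGraph V) (S C : Set V) : Prop :=
  ∃ v ∈ S, C = {u | ReachIn G S u v}

/-- A safe set: nonempty, and no component of `G[S]` is adjacent to a larger
component of `G - S`. -/
def IsSafeSet (G : SimpleGraph V) (S : Set V) : Prop :=
  S.Nonempty ∧ ∀ C D : Set V, IsCompOf G S C → IsCompOf G Sᶜ D →
    SetsAdj G C D → D.ncard ≤ C.ncard

/-- A connected safe set. -/
def IsConnSafeSet (G : SimpleGraph V) (S : Set V) : Prop :=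
  IsSafeSet G S ∧ (G.induce S).Connected

/-- The safe number: minimum size of a safe set. -/
noncomputable def sNum (G : SimpleGraph V) : ℕ :=
  sInf {n | ∃ S : Set V, IsSafeSet G S ∧ S.ncard = n}

/-- The connected safe number: minimum size of a connected safe set. -/
noncomputable def csNum (G : SimpleGraph V) : ℕ :=
  sInf {n | ∃ S : Set V, IsConnSafeSet G S ∧ S.ncard = n}

/-- Vertices of the reduction graph `H` built from an RBDS instance `(R, B; E, k)`,
where `s` is the target safe-set size: the hub `u`, the red and blue vertices,
`2s` pendant leaves at the hub and at each red vertex, and for each red vertex a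
star `K_{1,s-1}` (a center and `s - 1` leaves). -/
inductive HVert (R B : Type*) (s : ℕ) : Type _
  | hub : HVert R B s
  | red : R → HVert R B s
  | blue : B → HVert R B s
  | pendHub : Fin (2 * s) → HVert R B s
  | pendRed : R → Fin (2 * s) → HVert R B s
  | starCenter : R → HVert R B s
  | starLeaf : R → Fin (s - 1) → HVert R B s

/-- The (one-sided) adjacency relation of the reduction graph. -/
def HRel (R B : Type*) (s : ℕ) (E : R → B → Prop) :
    HVert R B s → HVert R B s → Prop
  | .red r, .blue b => E r b
  | .hub, .blue _ => True
  | .hub, .pendHub _ => True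
  | .red r, .pendRed r' _ => r = r'
  | .red r, .starCenter r' => r = r'
  | .starCenter r, .starLeaf r' _ => r = r'
  | _, _ => False

/-- The reduction graph `H`. -/
def HGraph (R B : Type*) (s : ℕ) (E : R → B → Prop) : SimpleGraph (HVert R B s) :=
  SimpleGraph.fromRel (HRel R B s E)

/-! ### Generic reachability lemmas -/

section Reach
variable {G : SimpleGraph V} {S : Set V} {u v w : V}

lemma reachIn_refl (h : v ∈ S) : ReachIn G S v v := ⟨h, h, .refl _⟩

lemma reachIn_symm (h : ReachIn G S u v) : ReachIn G S v u := by
  obtain ⟨hu, hv, hr⟩ := h; exact ⟨hv, hu, hr.symm⟩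

lemma reachIn_trans (h : ReachIn G S u v) (h' : ReachIn G S v w) : ReachIn G S u w := by
  obtain ⟨hu, hv, hr⟩ := h; obtain ⟨hv', hw, hr'⟩ := h'
  exact ⟨hu, hw, hr.trans hr'⟩

lemma reachIn_mem (h : ReachIn G S u v) : u ∈ S := h.1

lemma reachIn_adj (hu : u ∈ S) (hv : v ∈ S) (h : G.Adj u v) : ReachIn G S u v :=
  ⟨hu, hv, SimpleGraph.Adj.reachable (by exact h)⟩

lemma reachIn_mem_closed {T : Set V}
    (hcl : ∀ ⦃x y : V⦄, x ∈ T → y ∈ S → G.Adj x y → y ∈ T)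
    (hv : v ∈ T) (h : ReachIn G S v u) : u ∈ T := by
  obtain ⟨hvS, huS, hr⟩ := h
  have key : ∀ (a b : (S : Set V)), (G.induce S).Walk a b → a.1 ∈ T → b.1 ∈ T := by
    intro a b p
    induction p with
    | nil => exact id
    | cons hadj q ih =>
        rename_i x y z
        intro haT
        exact ih (hcl haT y.2 hadj)
  exact key _ _ hr.some hv

lemma exists_boundary {a b : V} (w : G.Walk a b) (ha : a ∉ S) (hb : b ∈ S) :
    ∃ x y, x ∉ S ∧ y ∈ S ∧ G.Adj x y ∧ ReachIn G Sᶜ a x := by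
  induction w with
  | nil => exact absurd hb ha
  | cons hadj q ih =>
      rename_i u c d
      by_cases hc : c ∈ S
      · exact ⟨u, c, ha, hc, hadj, reachIn_refl ha⟩
      · obtain ⟨x, y, hx, hy, hxy, hr⟩ := ih hc hb
        exact ⟨x, y, hx, hy, hxy, reachIn_trans (reachIn_adj ha hc hadj) hr⟩

end Reach

/-! ### HVert infrastructure -/

namespace HVert

variable {R B : Type*} {s : ℕ}

def encode : HVert R B s →
    Unit ⊕ R ⊕ B ⊕ Fin (2 * s) ⊕ (R × Fin (2 * s)) ⊕ R ⊕ (R × Fin (s - 1))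
  | .hub => .inl ()
  | .red r => .inr (.inl r)
  | .blue b => .inr (.inr (.inl b))
  | .pendHub i => .inr (.inr (.inr (.inl i)))
  | .pendRed r i => .inr (.inr (.inr (.inr (.inl (r, i)))))
  | .starCenter r => .inr (.inr (.inr (.inr (.inr (.inl r)))))
  | .starLeaf r i => .inr (.inr (.inr (.inr (.inr (.inr (r, i))))))

lemma encode_injective : Function.Injective (encode (R := R) (B := B) (s := s)) := by
  intro x y h
  cases x <;> cases y <;> simp_all [encode]

instance [Finite R] [Finite B] : Finite (HVert R B s) :=
  Finite.of_injective encode encode_injective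

end HVert

section Adj
variable {R B : Type*} {s : ℕ} {E : R → B → Prop}

lemma adj_iff {x y : HVert R B s} :
    (HGraph R B s E).Adj x y ↔ x ≠ y ∧ (HRel R B s E x y ∨ HRel R B s E y x) :=
  SimpleGraph.fromRel_adj _ _ _

lemma adj_hub_blue (b : B) : (HGraph R B s E).Adj .hub (.blue b) := by
  simp [adj_iff, HRel]

lemma adj_hub_pendHub (i : Fin (2 * s)) : (HGraph R B s E).Adj .hub (.pendHub i) := by
  simp [adj_iff, HRel]

lemma adj_red_blue {r : R} {b : B} (h : E r b) : (HGraph R B s E).Adj (.red r) (.blue b) := by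
  simp [adj_iff, HRel, h]

lemma adj_red_pendRed (r : R) (i : Fin (2 * s)) :
    (HGraph R B s E).Adj (.red r) (.pendRed r i) := by
  simp [adj_iff, HRel]

lemma adj_red_starCenter (r : R) : (HGraph R B s E).Adj (.red r) (.starCenter r) := by
  simp [adj_iff, HRel]

lemma adj_starCenter_starLeaf (r : R) (i : Fin (s - 1)) :
    (HGraph R B s E).Adj (.starCenter r) (.starLeaf r i) := by
  simp [adj_iff, HRel]

lemma reach_hub (hconn : ∀ r : R, ∃ b : B, E r b) (x : HVert R B s) :
    (HGraph R B s E).Reachable x .hub := by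
  have hred : ∀ r : R, (HGraph R B s E).Reachable (.red r) .hub := by
    intro r
    obtain ⟨b, hb⟩ := hconn r
    exact ((adj_red_blue hb).reachable).trans (adj_hub_blue b).reachable.symm
  cases x with
  | hub => rfl
  | red r => exact hred r
  | blue b => exact (adj_hub_blue b).reachable.symm
  | pendHub i => exact (adj_hub_pendHub i).reachable.symm
  | pendRed r i => exact (adj_red_pendRed r i).reachable.symm.trans (hred r)
  | starCenter r => exact (adj_red_starCenter r).reachable.symm.trans (hred r)
  | starLeaf r i =>
      exact ((adj_starCenter_starLeaf r i).reachable.symm.trans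
        (adj_red_starCenter r).reachable.symm).trans (hred r)

/-- A vertex with `2s` pendant leaves must be in every safe set of size `≤ s`. -/
lemma big_vertex_mem [Finite R] [Finite B] (hconn : ∀ r : R, ∃ b : B, E r b)
    {S : Set (HVert R B s)} (hS : IsSafeSet (HGraph R B s E) S)
    (hcard : S.ncard ≤ s) (v : HVert R B s) (p : Fin (2 * s) → HVert R B s)
    (hp : Function.Injective p) (hadj : ∀ i, (HGraph R B s E).Adj v (p i)) :
    v ∈ S := by
  by_contra hv
  set H := HGraph R B s E with hH
  -- the big outside component
  set D : Set (HVert R B s) := {x | ReachIn H Sᶜ x v} with hD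
  have hDcomp : IsCompOf H Sᶜ D := ⟨v, hv, rfl⟩
  -- counting: D is big
  set I : Set (Fin (2 * s)) := {i | p i ∉ S} with hI
  have hIc : p '' Iᶜ ⊆ S := by
    rintro _ ⟨i, hi, rfl⟩
    simpa [hI] using hi
  have hIc_card : Iᶜ.ncard ≤ s := by
    calc Iᶜ.ncard = (p '' Iᶜ).ncard := (Set.ncard_image_of_injective _ hp).symm
    _ ≤ S.ncard := Set.ncard_le_ncard hIc (Set.toFinite _)
    _ ≤ s := hcard
  have hIcard : s ≤ I.ncard := by
    have := Set.ncard_add_ncard_compl I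
    have hcd : Nat.card (Fin (2 * s)) = 2 * s := by simp
    omega
  have hsub : insert v (p '' I) ⊆ D := by
    rintro x (rfl | ⟨i, hi, rfl⟩)
    · exact reachIn_refl hv
    · exact reachIn_adj hi hv (hadj i).symm
  have hvp : v ∉ p '' I := by
    rintro ⟨i, hi, h⟩
    exact (hadj i).ne (h ▸ rfl)
  have hDcard : s + 1 ≤ D.ncard := by
    have h1 : (insert v (p '' I)).ncard = (p '' I).ncard + 1 :=
      Set.ncard_insert_of_notMem hvp (Set.toFinite _)
    have h2 : (p '' I).ncard = I.ncard := Set.ncard_image_of_injective _ hp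
    have h3 : (insert v (p '' I)).ncard ≤ D.ncard :=
      Set.ncard_le_ncard hsub (Set.toFinite _)
    omega
  -- find adjacent components
  obtain ⟨w, hw⟩ := hS.1
  obtain ⟨pw⟩ := (reach_hub hconn v).trans (reach_hub hconn w).symm
  obtain ⟨x, y, hx, hy, hxy, hr⟩ := exists_boundary pw hv hw
  have hxD : x ∈ D := reachIn_symm hr
  set C : Set (HVert R B s) := {z | ReachIn H S z y} with hC
  have hCcomp : IsCompOf H S C := ⟨y, hy, rfl⟩
  have hCS : C ⊆ S := fun z hz => reachIn_mem hz
  have hadjCD : SetsAdj H C D := ⟨y, reachIn_refl hy, x, hxD, hxy.symm⟩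
  have := hS.2 C D hCcomp hDcomp hadjCD
  have hCcard : C.ncard ≤ s := le_trans (Set.ncard_le_ncard hCS (Set.toFinite _)) hcard
  omega

end Adj

namespace HVert
variable {R B : Type*} {s : ℕ}
def rOf : HVert R B s → Option R
  | .starCenter r => some r
  | .starLeaf r _ => some r
  | _ => none
end HVert

section Closure
variable {R B : Type*} {s : ℕ} {E : R → B → Prop} {S : Set (HVert R B s)}

lemma star_closed {r0 : R} (hred : HVert.red r0 ∈ S) :
    ∀ ⦃x y : HVert R B s⦄,
      x ∈ insert (HVert.starCenter r0) (Set.range (HVert.starLeaf r0)) → y ∈ Sᶜ →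
      (HGraph R B s E).Adj x y →
      y ∈ insert (HVert.starCenter r0) (Set.range (HVert.starLeaf r0)) := by
  rintro x y hx hy hadj
  rw [adj_iff] at hadj
  rcases hx with rfl | ⟨i, rfl⟩ <;> obtain ⟨hne, h | h⟩ := hadj <;> cases y <;>
    simp only [HRel] at h
  · subst h; exact Set.mem_insert_of_mem _ ⟨_, rfl⟩
  · subst h; exact absurd hred hy
  · subst h; exact Set.mem_insert _ _

lemma tee_closed {r : R} (hno : ∀ b : B, E r b → HVert.blue b ∉ S) :
    ∀ ⦃x y : HVert R B s⦄,
      x ∈ {x : HVert R B s | x = .red r ∨ (∃ i, x = .pendRed r i) ∨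
        x = .starCenter r ∨ ∃ i, x = .starLeaf r i} → y ∈ S →
      (HGraph R B s E).Adj x y →
      y ∈ {x : HVert R B s | x = .red r ∨ (∃ i, x = .pendRed r i) ∨
        x = .starCenter r ∨ ∃ i, x = .starLeaf r i} := by
  rintro x y hx hy hadj
  rw [adj_iff] at hadj
  rcases hx with rfl | ⟨i, rfl⟩ | rfl | ⟨i, rfl⟩ <;> obtain ⟨hne, h | h⟩ := hadj <;>
    cases y <;> simp only [HRel] at h
  · exact absurd hy (hno _ h)
  · subst h; exact Or.inr (Or.inl ⟨_, rfl⟩)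
  · subst h; exact Or.inr (Or.inr (Or.inl rfl))
  · subst h; exact Or.inl rfl
  · subst h; exact Or.inr (Or.inr (Or.inr ⟨_, rfl⟩))
  · subst h; exact Or.inl rfl
  · subst h; exact Or.inr (Or.inr (Or.inl rfl))

end Closure

theorem stmt11 {R B : Type*} [Fintype R] [Fintype B] (E : R → B → Prop) (k : ℕ)
    (hk : k < Fintype.card R)
    (hconn : ∀ r : R, ∃ b : B, E r b)
    (S : Set (HVert R B (k + Fintype.card R + 1)))
    (hS : IsSafeSet (HGraph R B (k + Fintype.card R + 1) E) S)
    (hcard : S.ncard ≤ k + Fintype.card R + 1) :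
    (HVert.hub ∈ S ∧ ∀ r : R, HVert.red r ∈ S) ∧
    ((HGraph R B (k + Fintype.card R + 1) E).induce S).Connected ∧
    {b : B | HVert.blue b ∈ S}.ncard ≤ k ∧
    ∀ r : R, ∃ b : B, HVert.blue b ∈ S ∧ E r b := by
  classical
  -- Step 1: hub and all reds are in S
  have hhub : HVert.hub ∈ S :=
    big_vertex_mem hconn hS hcard .hub (fun i => .pendHub i)
      (fun i j h => by simpa using h) (fun i => adj_hub_pendHub i)
  have hreds : ∀ r : R, HVert.red r ∈ S := fun r =>
    big_vertex_mem hconn hS hcard (.red r) (fun i => .pendRed r i)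
      (fun i j h => by simpa using h) (fun i => adj_red_pendRed r i)
  -- the "extra" vertices
  have hAS : insert HVert.hub (Set.range HVert.red) ⊆ S := by
    rintro x (rfl | ⟨r, rfl⟩); exacts [hhub, hreds r]
  have hAcard : (insert HVert.hub (Set.range HVert.red) :
      Set (HVert R B (k + Fintype.card R + 1))).ncard = Fintype.card R + 1 := by
    rw [Set.ncard_insert_of_notMem (by simp) (Set.toFinite _),
        ← Set.image_univ, Set.ncard_image_of_injective _ (fun a b h => by simpa using h),
        Set.ncard_univ, Nat.card_eq_fintype_card]
  have hXcard : (S \ insert HVert.hub (Set.range HVert.red)).ncard ≤ k := by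
    rw [Set.ncard_diff hAS (Set.toFinite _)]
    omega
  -- Step 2: a red vertex whose attached star avoids S
  have hfree : ∃ r : R, HVert.starCenter r ∉ S ∧ ∀ i, HVert.starLeaf r i ∉ S := by
    by_contra h
    push_neg at h
    have hchoice : ∀ r : R, ∃ x ∈ S \ insert HVert.hub (Set.range HVert.red),
        HVert.rOf x = some r := by
      intro r
      by_cases hc : HVert.starCenter r ∈ S
      · exact ⟨_, ⟨hc, by simp⟩, rfl⟩
      · obtain ⟨i, hi⟩ := h r hc
        exact ⟨_, ⟨hi, by simp⟩, rfl⟩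
    choose f hfX hfr using hchoice
    have hfinj : Function.Injective f := fun a b hab => by
      have h1 := hfr a
      rw [hab, hfr b] at h1
      exact (Option.some.inj h1).symm
    have hcontr : Fintype.card R ≤
        (S \ insert HVert.hub (Set.range HVert.red)).ncard := by
      have h1 : Set.range f ⊆ S \ insert HVert.hub (Set.range HVert.red) := by
        rintro _ ⟨r, rfl⟩; exact hfX r
      calc Fintype.card R = (Set.range f).ncard := by
            rw [← Set.image_univ, Set.ncard_image_of_injective _ hfinj, Set.ncard_univ,
              Nat.card_eq_fintype_card]
      _ ≤ _ := Set.ncard_le_ncard h1 (Set.toFinite _)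
    omega
  obtain ⟨r0, hc0, hl0⟩ := hfree
  -- the star component of H - S
  have hDeq : {x | ReachIn (HGraph R B (k + Fintype.card R + 1) E) Sᶜ x
      (HVert.starCenter r0)} = insert (HVert.starCenter r0) (Set.range (HVert.starLeaf r0)) := by
    ext x
    constructor
    · intro hx
      exact reachIn_mem_closed (star_closed (hreds r0)) (Set.mem_insert _ _) (reachIn_symm hx)
    · rintro (rfl | ⟨i, rfl⟩)
      · exact reachIn_refl hc0
      · exact reachIn_adj (hl0 i) hc0 (adj_starCenter_starLeaf r0 i).symm
  have hDscard : (insert (HVert.starCenter r0) (Set.range (HVert.starLeaf r0)) :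
      Set (HVert R B (k + Fintype.card R + 1))).ncard = k + Fintype.card R + 1 := by
    rw [Set.ncard_insert_of_notMem (by simp) (Set.toFinite _),
        ← Set.image_univ, Set.ncard_image_of_injective _ (fun a b h => by simpa using h),
        Set.ncard_univ, Nat.card_eq_fintype_card, Fintype.card_fin]
    omega
  have hCcomp : IsCompOf (HGraph R B (k + Fintype.card R + 1) E) S
      {z | ReachIn (HGraph R B (k + Fintype.card R + 1) E) S z (HVert.red r0)} :=
    ⟨_, hreds r0, rfl⟩
  have hDcomp : IsCompOf (HGraph R B (k + Fintype.card R + 1) E) Sᶜ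
      (insert (HVert.starCenter r0) (Set.range (HVert.starLeaf r0))) :=
    ⟨HVert.starCenter r0, hc0, hDeq.symm⟩
  have hadjCD : SetsAdj (HGraph R B (k + Fintype.card R + 1) E)
      {z | ReachIn (HGraph R B (k + Fintype.card R + 1) E) S z (HVert.red r0)}
      (insert (HVert.starCenter r0) (Set.range (HVert.starLeaf r0))) :=
    ⟨_, reachIn_refl (hreds r0), _, Set.mem_insert _ _, adj_red_starCenter r0⟩
  have hsafe := hS.2 _ _ hCcomp hDcomp hadjCD
  have hCS : {z | ReachIn (HGraph R B (k + Fintype.card R + 1) E) S z (HVert.red r0)} ⊆ S :=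
    fun z hz => reachIn_mem hz
  have hCeq : {z | ReachIn (HGraph R B (k + Fintype.card R + 1) E) S z (HVert.red r0)} = S := by
    refine Set.eq_of_subset_of_ncard_le hCS ?_ (Set.toFinite _)
    have := Set.ncard_le_ncard hCS (Set.toFinite _)
    omega
  have hconn2 : ((HGraph R B (k + Fintype.card R + 1) E).induce S).Connected := by
    rw [SimpleGraph.connected_iff]
    refine ⟨?_, ⟨⟨_, hhub⟩⟩⟩
    rintro ⟨x, hx⟩ ⟨y, hy⟩
    have hx' : x ∈ {z | ReachIn (HGraph R B (k + Fintype.card R + 1) E) S z (HVert.red r0)} :=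
      by rw [hCeq]; exact hx
    have hy' : y ∈ {z | ReachIn (HGraph R B (k + Fintype.card R + 1) E) S z (HVert.red r0)} :=
      by rw [hCeq]; exact hy
    obtain ⟨hx1, hx2, hrx⟩ := hx'
    obtain ⟨hy1, hy2, hry⟩ := hy'
    exact hrx.trans hry.symm
  -- Step 3: few blues
  have hblue : {b : B | HVert.blue b ∈ S}.ncard ≤ k := by
    have h1 : HVert.blue '' {b : B | HVert.blue b ∈ S} ⊆
        S \ insert HVert.hub (Set.range HVert.red) := by
      rintro _ ⟨b, hb, rfl⟩; exact ⟨hb, by simp⟩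
    calc {b : B | HVert.blue b ∈ S}.ncard
        = (HVert.blue '' {b : B | HVert.blue b ∈ S}).ncard :=
          (Set.ncard_image_of_injective _ (fun a b h => by simpa using h)).symm
    _ ≤ _ := Set.ncard_le_ncard h1 (Set.toFinite _)
    _ ≤ k := hXcard
  -- Step 4: domination
  have hdom : ∀ r : R, ∃ b : B, HVert.blue b ∈ S ∧ E r b := by
    intro r
    by_contra hno
    push_neg at hno
    have hno' : ∀ b : B, E r b → HVert.blue b ∉ S := fun b hb hbS => hno b hbS hb
    have hhubT : (HVert.hub : HVert R B (k + Fintype.card R + 1)) ∈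
        {x : HVert R B (k + Fintype.card R + 1) | x = .red r ∨ (∃ i, x = .pendRed r i) ∨
          x = .starCenter r ∨ ∃ i, x = .starLeaf r i} := by
      refine reachIn_mem_closed (tee_closed hno') (Or.inl rfl) ?_
      exact ⟨hreds r, hhub, hconn2.preconnected _ _⟩
    simp at hhubT
  exact ⟨⟨hhub, hreds⟩, hconn2, hblue, hdom⟩
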